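/- For every real s > 0 and every ξ ∈ ℝ, the complex-valued integral ∫_{−1}^{1} 1 / (√(1 − y²) · (s + i ξ y)) dy equals π / √(s² + ξ²). -/

import Mathlib

open MeasureTheory Set

set_option maxHeartbeats 1000000

noncomputable def gsub (t : ℝ) : ℝ := t / Real.sqrt (1 + t ^ 2)

lemma gsub_hasDerivAt (t : ℝ) :
    HasDerivAt gsub (((1 + t ^ 2) * Real.sqrt (1 + t ^ 2))⁻¹) t := by
  have hq : (0:ℝ) < 1 + t ^ 2 := by positivity
  have hsq : (0:ℝ) < Real.sqrt (1 + t ^ 2) := Real.sqrt_pos.mpr hq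
  have h1 : HasDerivAt (fun t : ℝ => 1 + t ^ 2) (2 * t) t := by
    simpa using ((hasDerivAt_pow 2 t).const_add 1)
  have h2 : HasDerivAt (fun t : ℝ => Real.sqrt (1 + t ^ 2))
      (1 / (2 * Real.sqrt (1 + t ^ 2)) * (2 * t)) t :=
    (Real.hasDerivAt_sqrt hq.ne').comp t h1
  have h3 := (hasDerivAt_id t).div h2 hsq.ne'
  refine h3.congr_deriv (Eq.symm ?_)
  have h4 : Real.sqrt (1 + t ^ 2) ^ 2 = 1 + t ^ 2 := Real.sq_sqrt hq.le
  rw [h4]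
  rw [eq_div_iff hq.ne']
  field_simp
  simp only [id_eq]
  linear_combination -h4

lemma gsub_mem (t : ℝ) : gsub t ∈ Ioo (-1 : ℝ) 1 := by
  have hq : (0:ℝ) < 1 + t ^ 2 := by positivity
  have hsq : (0:ℝ) < Real.sqrt (1 + t ^ 2) := Real.sqrt_pos.mpr hq
  have h4 : Real.sqrt (1 + t ^ 2) ^ 2 = 1 + t ^ 2 := Real.sq_sqrt hq.le
  have habs : |t| < Real.sqrt (1 + t ^ 2) := by
    nlinarith [abs_nonneg t, sq_abs t, hsq]
  constructor
  · rw [gsub, neg_lt, ← neg_div, div_lt_one hsq]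
    calc -t ≤ |t| := neg_le_abs t
    _ < _ := habs
  · rw [gsub, div_lt_one hsq]
    calc t ≤ |t| := le_abs_self t
    _ < _ := habs

lemma gsub_image : gsub '' univ = Ioo (-1 : ℝ) 1 := by
  apply subset_antisymm
  · rintro _ ⟨t, -, rfl⟩; exact gsub_mem t
  · rintro x ⟨hx1, hx2⟩
    have hc2 : (0:ℝ) < 1 - x ^ 2 := by nlinarith
    set c := Real.sqrt (1 - x ^ 2) with hc
    have hcpos : 0 < c := Real.sqrt_pos.mpr hc2
    have hcsq : c ^ 2 = 1 - x ^ 2 := Real.sq_sqrt hc2.le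
    refine ⟨x / c, trivial, ?_⟩
    have hq : 1 + (x / c) ^ 2 = (1 / c) ^ 2 := by
      field_simp
      nlinarith [hcsq]
    rw [gsub, hq, Real.sqrt_sq (by positivity)]
    field_simp

lemma gsub_injOn : InjOn gsub univ := by
  have : StrictMono gsub := by
    apply strictMono_of_deriv_pos
    intro t
    rw [(gsub_hasDerivAt t).deriv]
    have hq : (0:ℝ) < 1 + t ^ 2 := by positivity
    positivity
  exact this.injective.injOn

lemma sqrt_one_sub_gsub_sq (t : ℝ) :
    Real.sqrt (1 - gsub t ^ 2) = (Real.sqrt (1 + t ^ 2))⁻¹ := by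
  have hq : (0:ℝ) < 1 + t ^ 2 := by positivity
  have hsq : (0:ℝ) < Real.sqrt (1 + t ^ 2) := Real.sqrt_pos.mpr hq
  have h4 : Real.sqrt (1 + t ^ 2) ^ 2 = 1 + t ^ 2 := Real.sq_sqrt hq.le
  have : 1 - gsub t ^ 2 = (1 + t ^ 2)⁻¹ := by
    rw [gsub, div_pow, h4]
    field_simp
    ring
  rw [this, Real.sqrt_inv]

/-- For `s > 0` and `ξ ∈ ℝ`,
`∫_{−1}^{1} 1/(√(1 − y²) (s + i ξ y)) dy = π/√(s² + ξ²)`. -/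
theorem stmt5 (s ξ : ℝ) (hs : 0 < s) :
    ∫ y in Ioo (-1 : ℝ) 1,
        1 / (((Real.sqrt (1 - y ^ 2) : ℝ) : ℂ) * ((s : ℂ) + Complex.I * (ξ : ℂ) * (y : ℂ)))
      = ((Real.pi / Real.sqrt (s ^ 2 + ξ ^ 2) : ℝ) : ℂ) := by
  set r := Real.sqrt (s ^ 2 + ξ ^ 2) with hrdef
  have hr2 : r ^ 2 = s ^ 2 + ξ ^ 2 := Real.sq_sqrt (by positivity)
  have hrpos : 0 < r := Real.sqrt_pos.mpr (by positivity)
  set f : ℝ → ℂ := fun y =>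
    1 / (((Real.sqrt (1 - y ^ 2) : ℝ) : ℂ) * ((s : ℂ) + Complex.I * (ξ : ℂ) * (y : ℂ))) with hf
  set h : ℝ → ℝ := fun y => s / (Real.sqrt (1 - y ^ 2) * (s ^ 2 + ξ ^ 2 * y ^ 2)) with hh
  -- Step 1: the real integral
  have hderiv : ∀ t ∈ (univ : Set ℝ),
      HasDerivWithinAt gsub (((1 + t ^ 2) * Real.sqrt (1 + t ^ 2))⁻¹) univ t :=
    fun t _ => (gsub_hasDerivAt t).hasDerivWithinAt
  have hJ : ∫ y in Ioo (-1 : ℝ) 1, h y = Real.pi / r := by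
    rw [← gsub_image,
      integral_image_eq_integral_abs_deriv_smul MeasurableSet.univ hderiv gsub_injOn h]
    have key : ∀ t : ℝ, |((1 + t ^ 2) * Real.sqrt (1 + t ^ 2))⁻¹| • h (gsub t)
        = s⁻¹ * (1 + (r / s * t) ^ 2)⁻¹ := by
      intro t
      have hq : (0:ℝ) < 1 + t ^ 2 := by positivity
      have hsq : (0:ℝ) < Real.sqrt (1 + t ^ 2) := Real.sqrt_pos.mpr hq
      have h4 : Real.sqrt (1 + t ^ 2) ^ 2 = 1 + t ^ 2 := Real.sq_sqrt hq.le
      have hg2 : gsub t ^ 2 = t ^ 2 / (1 + t ^ 2) := by rw [gsub, div_pow, h4]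
      simp only [hh, smul_eq_mul]
      rw [abs_of_pos (show (0:ℝ) < ((1 + t ^ 2) * Real.sqrt (1 + t ^ 2))⁻¹ by positivity),
        sqrt_one_sub_gsub_sq, hg2]
      have hden : s ^ 2 + ξ ^ 2 * (t ^ 2 / (1 + t ^ 2)) = (s ^ 2 + r ^ 2 * t ^ 2) / (1 + t ^ 2) := by
        field_simp; nlinarith [hr2]
      rw [hden]
      have hrt : (0:ℝ) < s ^ 2 + r ^ 2 * t ^ 2 := by positivity
      have h6 : 1 + (r / s * t) ^ 2 = (s ^ 2 + r ^ 2 * t ^ 2) / s ^ 2 := by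
        field_simp
      rw [h6]
      field_simp
    simp_rw [key]
    rw [setIntegral_univ]
    have hint2 : ∫ x : ℝ, s⁻¹ * (1 + (r / s * x) ^ 2)⁻¹
        = |(r / s)⁻¹| • ∫ x : ℝ, s⁻¹ * (1 + x ^ 2)⁻¹ :=
      MeasureTheory.Measure.integral_comp_mul_left (fun u : ℝ => s⁻¹ * (1 + u ^ 2)⁻¹) (r / s)
    rw [hint2, integral_const_mul, integral_univ_inv_one_add_sq,
      abs_of_pos (by positivity : (0:ℝ) < ((r / s)⁻¹ : ℝ)), smul_eq_mul]
    field_simp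
  -- integrability of the complex integrand and its reflection
  have hbound0 : IntegrableOn (fun y => (Real.sqrt (1 - y ^ 2))⁻¹) (Ioo (-1 : ℝ) 1) := by
    rw [← gsub_image,
      integrableOn_image_iff_integrableOn_abs_deriv_smul MeasurableSet.univ hderiv gsub_injOn]
    have : ∀ t : ℝ, |((1 + t ^ 2) * Real.sqrt (1 + t ^ 2))⁻¹| • (Real.sqrt (1 - gsub t ^ 2))⁻¹
        = (1 + t ^ 2)⁻¹ := by
      intro t
      have hq : (0:ℝ) < 1 + t ^ 2 := by positivity
      have hsq : (0:ℝ) < Real.sqrt (1 + t ^ 2) := Real.sqrt_pos.mpr hq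
      rw [smul_eq_mul, sqrt_one_sub_gsub_sq, abs_of_pos (by positivity), inv_inv]
      field_simp
    simp_rw [this]
    rw [integrableOn_univ]
    exact integrable_inv_one_add_sq
  have hbound : IntegrableOn (fun y => s⁻¹ * (Real.sqrt (1 - y ^ 2))⁻¹) (Ioo (-1 : ℝ) 1) :=
    hbound0.const_mul _
  have hz : ∀ y : ℝ, ((s : ℂ) + Complex.I * (ξ : ℂ) * (y : ℂ)) ≠ 0 := by
    intro y hy
    have := congrArg Complex.re hy
    simp at this
    exact hs.ne' this
  have hznorm : ∀ y : ℝ, s ≤ ‖(s : ℂ) + Complex.I * (ξ : ℂ) * (y : ℂ)‖ := by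
    intro y
    have : ((s : ℂ) + Complex.I * (ξ : ℂ) * (y : ℂ)).re = s := by simp
    calc s = |((s : ℂ) + Complex.I * (ξ : ℂ) * (y : ℂ)).re| := by rw [this, abs_of_pos hs]
    _ ≤ _ := Complex.abs_re_le_norm _
  have hnormf : ∀ y ∈ Ioo (-1:ℝ) 1, ‖f y‖ ≤ s⁻¹ * (Real.sqrt (1 - y ^ 2))⁻¹ := by
    intro y hy
    have hc2 : (0:ℝ) < 1 - y ^ 2 := by
      obtain ⟨h1, h2⟩ := hy; nlinarith
    have hcpos : 0 < Real.sqrt (1 - y ^ 2) := Real.sqrt_pos.mpr hc2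
    rw [hf]
    simp only [norm_div, norm_one, norm_mul, Complex.norm_real, Real.norm_eq_abs,
      abs_of_pos hcpos]
    have habs : 0 < ‖(s : ℂ) + Complex.I * (ξ : ℂ) * (y : ℂ)‖ :=
      lt_of_lt_of_le hs (hznorm y)
    rw [div_le_iff₀ (mul_pos hcpos habs)]
    calc (1:ℝ) = s⁻¹ * s := by field_simp
    _ ≤ s⁻¹ * (Real.sqrt (1 - y ^ 2))⁻¹ * (Real.sqrt (1 - y ^ 2) * ‖(s : ℂ) + Complex.I * (ξ : ℂ) * (y : ℂ)‖) := by
        rw [mul_assoc, mul_assoc]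
        apply mul_le_mul_of_nonneg_left _ (by positivity)
        rw [← mul_assoc, inv_mul_cancel₀ hcpos.ne', one_mul]
        simpa [mul_assoc] using hznorm y
  have hcontf : ContinuousOn f (Ioo (-1:ℝ) 1) := by
    apply ContinuousOn.div continuousOn_const
    · apply ContinuousOn.mul
      · exact (Complex.continuous_ofReal.comp
          (Real.continuous_sqrt.comp (by continuity))).continuousOn
      · exact (continuous_const.add (continuous_const.mul
          Complex.continuous_ofReal)).continuousOn
    · intro y hy
      have hc2 : (0:ℝ) < 1 - y ^ 2 := by obtain ⟨h1, h2⟩ := hy; nlinarith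
      have hcpos : 0 < Real.sqrt (1 - y ^ 2) := Real.sqrt_pos.mpr hc2
      exact mul_ne_zero (by exact_mod_cast hcpos.ne') (hz y)
  have hintf : IntegrableOn f (Ioo (-1:ℝ) 1) := by
    apply Integrable.mono' hbound
      (hcontf.aestronglyMeasurable measurableSet_Ioo)
    exact (ae_restrict_iff' measurableSet_Ioo).mpr (Filter.Eventually.of_forall hnormf)
  have hintfneg : IntegrableOn (fun y => f (-y)) (Ioo (-1:ℝ) 1) := by
    apply Integrable.mono' hbound
    · apply ContinuousOn.aestronglyMeasurable _ measurableSet_Ioo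
      apply hcontf.comp continuous_neg.continuousOn
      intro y hy
      simp only [mem_Ioo] at hy ⊢
      constructor <;> linarith [hy.1, hy.2]
    · apply (ae_restrict_iff' measurableSet_Ioo).mpr (Filter.Eventually.of_forall _)
      intro y hy
      have := hnormf (-y) ⟨by linarith [hy.2], by linarith [hy.1]⟩
      simpa using this
  -- Step 2: symmetry
  have hrefl : ∫ y in Ioo (-1:ℝ) 1, f (-y) = ∫ y in Ioo (-1:ℝ) 1, f y := by
    rw [← integral_Ioc_eq_integral_Ioo, ← integral_Ioc_eq_integral_Ioo,
      ← intervalIntegral.integral_of_le (by norm_num : (-1:ℝ) ≤ 1),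
      ← intervalIntegral.integral_of_le (by norm_num : (-1:ℝ) ≤ 1),
      intervalIntegral.integral_comp_neg f]
    norm_num
  have hsum : ∀ y ∈ Ioo (-1:ℝ) 1, f y + f (-y) = ((2 * h y : ℝ) : ℂ) := by
    intro y hy
    have hc2 : (0:ℝ) < 1 - y ^ 2 := by obtain ⟨h1, h2⟩ := hy; nlinarith
    have hcpos : 0 < Real.sqrt (1 - y ^ 2) := Real.sqrt_pos.mpr hc2
    have hcne : ((Real.sqrt (1 - y ^ 2) : ℝ) : ℂ) ≠ 0 := by exact_mod_cast hcpos.ne'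
    have hz1 := hz y
    have hz2 : ((s : ℂ) - Complex.I * (ξ : ℂ) * (y : ℂ)) ≠ 0 := by
      intro heq
      have := congrArg Complex.re heq
      simp at this
      exact hs.ne' this
    have hd : (0:ℝ) < s ^ 2 + ξ ^ 2 * y ^ 2 := by positivity
    have hd' : ((s : ℂ) ^ 2 + (ξ : ℂ) ^ 2 * (y : ℂ) ^ 2) ≠ 0 := by
      have hcast : ((s : ℂ) ^ 2 + (ξ : ℂ) ^ 2 * (y : ℂ) ^ 2)
          = ((s ^ 2 + ξ ^ 2 * y ^ 2 : ℝ) : ℂ) := by push_cast; ring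
      rw [hcast]
      exact_mod_cast hd.ne'
    rw [hf, hh]
    simp only [neg_sq, Complex.ofReal_neg]
    have hrw : (s:ℂ) + Complex.I * (ξ:ℂ) * -(y:ℂ) = (s:ℂ) - Complex.I * (ξ:ℂ) * (y:ℂ) := by
      ring
    rw [hrw]
    push_cast
    field_simp
    ring_nf
    rw [Complex.I_sq]
    ring
  have h2I : (2 : ℂ) * (∫ y in Ioo (-1:ℝ) 1, f y) = ((2 * (Real.pi / r) : ℝ) : ℂ) := by
    have : (2 : ℂ) * (∫ y in Ioo (-1:ℝ) 1, f y)
        = (∫ y in Ioo (-1:ℝ) 1, f y) + ∫ y in Ioo (-1:ℝ) 1, f (-y) := by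
      rw [hrefl]; ring
    rw [this, ← integral_add hintf hintfneg,
      setIntegral_congr_fun measurableSet_Ioo hsum]
    have hcast : (∫ x in Ioo (-1:ℝ) 1, ((2 * h x : ℝ) : ℂ))
        = ((∫ x in Ioo (-1:ℝ) 1, 2 * h x : ℝ) : ℂ) := integral_ofReal
    rw [hcast, integral_const_mul, hJ]
  have := h2I
  field_simp at this
  rw [hf] at this
  push_cast at this ⊢
  linear_combination this / 2
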